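/- Suppose g₁, g₂ : ℝ → GL(n,ℂ) are differentiable matrix-valued curves satisfying the system ġ₁ = g₁ Π_𝔨(i (g₂ g₁)^k) − Π_𝔨(i (g₁ g₂)^k) g₁ and ġ₂ = g₂ Π_𝔨(i (g₁ g₂)^k) − Π_𝔨(i (g₂ g₁)^k) g₂. Then the monodromy matrix g = g₁ g₂ satisfies the Lax equation ġ = g Π_𝔨(i g^k) − Π_𝔨(i g^k) g. -/

import Mathlib

open Matrix

noncomputable section

/-- The strictly upper triangular part `X₊` of a complex matrix. -/
def strictUpper {n : ℕ} (X : Matrix (Fin n) (Fin n) ℂ) : Matrix (Fin n) (Fin n) ℂ :=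
  Matrix.of fun i j => if i < j then X i j else 0

/-- The projection `Π_𝔨 X = X₊ − (X₊)*` onto skew-Hermitian matrices. -/
def Pik {n : ℕ} (X : Matrix (Fin n) (Fin n) ℂ) : Matrix (Fin n) (Fin n) ℂ :=
  strictUpper X - (strictUpper X)ᴴ

/-- If differentiable curves `g₁, g₂` of invertible matrices satisfy
`ġ₁ = g₁ Π_𝔨(i (g₂g₁)^k) − Π_𝔨(i (g₁g₂)^k) g₁` and
`ġ₂ = g₂ Π_𝔨(i (g₁g₂)^k) − Π_𝔨(i (g₂g₁)^k) g₂`, then the monodromy matrix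
`g = g₁ g₂` satisfies the Lax equation `ġ = g Π_𝔨(i g^k) − Π_𝔨(i g^k) g`. -/
theorem stmt_9 (n k : ℕ) (hk : 0 < k) (g1 g2 : ℝ → Matrix (Fin n) (Fin n) ℂ)
    (hinv1 : ∀ t : ℝ, IsUnit (g1 t)) (hinv2 : ∀ t : ℝ, IsUnit (g2 t))
    (h1 : ∀ (t : ℝ) (i j : Fin n), HasDerivAt (fun s => g1 s i j)
        ((g1 t * Pik (Complex.I • (g2 t * g1 t) ^ k)
          - Pik (Complex.I • (g1 t * g2 t) ^ k) * g1 t) i j) t)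
    (h2 : ∀ (t : ℝ) (i j : Fin n), HasDerivAt (fun s => g2 s i j)
        ((g2 t * Pik (Complex.I • (g1 t * g2 t) ^ k)
          - Pik (Complex.I • (g2 t * g1 t) ^ k) * g2 t) i j) t) :
    ∀ (t : ℝ) (i j : Fin n), HasDerivAt (fun s => (g1 s * g2 s) i j)
        ((g1 t * g2 t * Pik (Complex.I • (g1 t * g2 t) ^ k)
          - Pik (Complex.I • (g1 t * g2 t) ^ k) * (g1 t * g2 t)) i j) t := by
  intro t i j
  set A := g1 t * Pik (Complex.I • (g2 t * g1 t) ^ k)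
          - Pik (Complex.I • (g1 t * g2 t) ^ k) * g1 t with hA
  set B := g2 t * Pik (Complex.I • (g1 t * g2 t) ^ k)
          - Pik (Complex.I • (g2 t * g1 t) ^ k) * g2 t with hB
  have key : A * g2 t + g1 t * B
      = g1 t * g2 t * Pik (Complex.I • (g1 t * g2 t) ^ k)
          - Pik (Complex.I • (g1 t * g2 t) ^ k) * (g1 t * g2 t) := by
    rw [hA, hB]; noncomm_ring
  have hd : HasDerivAt (fun s => ∑ l, g1 s i l * g2 s l j)
      (∑ l, (A i l * g2 t l j + g1 t i l * B l j)) t := by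
    apply HasDerivAt.fun_sum
    intro l _
    exact (h1 t i l).mul (h2 t l j)
  have he : (∑ l, (A i l * g2 t l j + g1 t i l * B l j))
      = (A * g2 t + g1 t * B) i j := by
    simp [Matrix.add_apply, Matrix.mul_apply, Finset.sum_add_distrib]
  rw [← key]
  rw [← he]
  have hf : (fun s => (g1 s * g2 s) i j) = fun s => ∑ l, g1 s i l * g2 s l j := by
    funext s; rw [Matrix.mul_apply]
  rw [hf]; exact hd
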